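/- Let V be a symplectic complex vector space and B ∈ 𝔭(V) nilpotent and symmetric with respect to the symplectic form. Then there exist vectors v₁,v₁',...,v_s,v_s' ∈ V and integers d₁,...,d_s ≥ 0 such that the vectors B^a v_l, B^{a'} v_l' (0 ≤ a, a' ≤ d_l, 1 ≤ l ≤ s) form a basis of V, and all pairings among basis vectors vanish except (B^a v_l, B^{d_l - a} v_l') = 1. -/

import Mathlib

open Module LinearMap

universe u

def SymplecticNF (V : Type u) [AddCommGroup V] [Module ℂ V]
    (Ω : LinearMap.BilinForm ℂ V) (B : Module.End ℂ V) : Prop :=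
  ∃ (s : ℕ) (v v' : Fin s → V) (d : Fin s → ℕ),
      (∀ l, v l ≠ 0) ∧ (∀ l, v' l ≠ 0) ∧
      (∃ b : Basis ((Σ l : Fin s, Fin (d l + 1)) ⊕ (Σ l : Fin s, Fin (d l + 1))) ℂ V,
        (∀ (l : Fin s) (a : Fin (d l + 1)), b (Sum.inl ⟨l, a⟩) = (B ^ (a : ℕ)) (v l)) ∧
        (∀ (l : Fin s) (a : Fin (d l + 1)), b (Sum.inr ⟨l, a⟩) = (B ^ (a : ℕ)) (v' l))) ∧
      (∀ (l m : Fin s) (a c : ℕ), a ≤ d l → c ≤ d m →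
        Ω ((B ^ a) (v l)) ((B ^ c) (v m)) = 0) ∧
      (∀ (l m : Fin s) (a c : ℕ), a ≤ d l → c ≤ d m →
        Ω ((B ^ a) (v' l)) ((B ^ c) (v' m)) = 0) ∧
      (∀ (l m : Fin s) (a c : ℕ), a ≤ d l → c ≤ d m →
        Ω ((B ^ a) (v l)) ((B ^ c) (v' m)) = if l = m ∧ a + c = d l then 1 else 0)

theorem symplecticNF_trivial (V : Type u) [AddCommGroup V] [Module ℂ V]
    (Ω : LinearMap.BilinForm ℂ V) (B : Module.End ℂ V) (h : Subsingleton V) :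
    SymplecticNF V Ω B := by
  refine ⟨0, Fin.elim0, Fin.elim0, Fin.elim0, fun l => l.elim0, fun l => l.elim0,
    ⟨Basis.empty V, fun l => l.elim0, fun l => l.elim0⟩,
    fun l => l.elim0, fun l => l.elim0, fun l => l.elim0⟩

theorem symplecticNF_aux (n : ℕ) :
    ∀ (V : Type u) [AddCommGroup V] [Module ℂ V] [FiniteDimensional ℂ V]
      (Ω : LinearMap.BilinForm ℂ V), Ω.Nondegenerate → (∀ v w, Ω v w = -(Ω w v)) →
      ∀ (B : Module.End ℂ V), (∀ v w, Ω (B v) w = Ω v (B w)) → IsNilpotent B →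
      Module.finrank ℂ V ≤ n → SymplecticNF V Ω B := by
  induction n with
  | zero =>
    intro V _ _ _ Ω hΩ halt B hB hnil hrank
    exact symplecticNF_trivial V Ω B (Module.finrank_zero_iff.mp (Nat.le_zero.mp hrank))
  | succ n ih =>
    intro V _ _ _ Ω hΩ halt B hB hnil hrank
    rcases subsingleton_or_nontrivial V with hV | hV
    · exact symplecticNF_trivial V Ω B hV
    -- basic pairing facts
    have hrefl : Ω.IsRefl := fun x y h => by rw [halt, h, neg_zero]
    have hpow : ∀ (a : ℕ) (x y : V), Ω ((B ^ a) x) y = Ω x ((B ^ a) y) := by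
      intro a
      induction a with
      | zero => simp
      | succ a iha =>
        intro x y
        have hs : B ^ (a + 1) = B * B ^ a := pow_succ' B a
        rw [hs, Module.End.mul_apply, Module.End.mul_apply, hB, iha,
          ← Module.End.mul_apply, ← Module.End.mul_apply B, ← pow_succ, ← pow_succ']
    have hchain : ∀ (a c : ℕ) (x y : V), Ω ((B ^ a) x) ((B ^ c) y) = Ω ((B ^ (a + c)) x) y := by
      intro a c x y
      rw [← hpow c, ← Module.End.mul_apply, ← pow_add, add_comm c a]
    have hself : ∀ (k : ℕ) (x : V), Ω ((B ^ k) x) x = 0 := by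
      intro k x
      have h1 : Ω ((B ^ k) x) x = -(Ω ((B ^ k) x) x) := by
        conv_lhs => rw [hpow, halt]
      have h2 : (2 : ℂ) * Ω ((B ^ k) x) x = 0 := by linear_combination h1
      exact (mul_eq_zero.mp h2).resolve_left two_ne_zero
    -- nilpotency degree
    obtain ⟨m, hm⟩ := hnil
    have hex : ∃ k, B ^ k = 0 := ⟨m, hm⟩
    classical
    set k0 := Nat.find hex with hk0def
    have hk0 : B ^ k0 = 0 := Nat.find_spec hex
    have hk0pos : 0 < k0 := by
      rcases Nat.eq_zero_or_pos k0 with h | h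
      · exfalso
        rw [h, pow_zero] at hk0
        exact one_ne_zero (α := Module.End ℂ V) hk0
      · exact h
    set d : ℕ := k0 - 1 with hd
    have hd1 : B ^ (d + 1) = 0 := by
      have h : d + 1 = k0 := by omega
      rw [h]; exact hk0
    have hdne : B ^ d ≠ 0 := Nat.find_min hex (by omega)
    have hBtop : ∀ k, d < k → (B ^ k : Module.End ℂ V) = 0 := by
      intro k hk
      have h : B ^ k = B ^ (k - (d + 1)) * B ^ (d + 1) := by rw [← pow_add]; congr 1; omega
      rw [h, hd1, mul_zero]
    obtain ⟨v, hv⟩ : ∃ v : V, (B ^ d) v ≠ 0 := by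
      by_contra h
      push_neg at h
      exact hdne (LinearMap.ext fun x => h x)
    obtain ⟨w0, hw0⟩ : ∃ w, Ω ((B ^ d) v) w ≠ 0 := by
      by_contra h
      push_neg at h
      exact hv (hΩ.1 _ h)
    have hv1p : Ω ((B ^ d) v) ((Ω ((B ^ d) v) w0)⁻¹ • w0) = 1 := by
      rw [map_smul, smul_eq_mul, inv_mul_cancel₀ hw0]
    have key : ∀ j : ℕ, ∃ w : V, Ω ((B ^ d) v) w = 1 ∧
        ∀ k, d - j ≤ k → k < d → Ω ((B ^ k) v) w = 0 := by
      intro j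
      induction j with
      | zero => exact ⟨_, hv1p, fun k hk1 hk2 => absurd hk1 (by omega)⟩
      | succ j ihj =>
        obtain ⟨w, hw1, hw2⟩ := ihj
        by_cases hjd : d ≤ j
        · exact ⟨w, hw1, fun k hk1 hk2 => hw2 k (by omega) hk2⟩
        · set t := d - (j + 1) with ht
          set c := Ω ((B ^ t) v) w with hc
          refine ⟨w - c • (B ^ (d - t)) w, ?_, ?_⟩
          · have hz : (B ^ (d + (d - t)) : Module.End ℂ V) = 0 := hBtop _ (by omega)
            rw [map_sub, map_smul, hchain d (d - t), hz, hw1]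
            simp
          · intro k hk1 hk2
            rw [map_sub, map_smul, hchain k (d - t)]
            rcases Nat.lt_or_ge t k with hlt | hge
            · have hz : (B ^ (k + (d - t)) : Module.End ℂ V) = 0 := hBtop _ (by omega)
              rw [hz, hw2 k (by omega) hk2]
              simp
            · have hkt : k = t := by omega
              have he : k + (d - t) = d := by omega
              rw [he, hw1, hkt, ← hc]
              simp
    obtain ⟨v', hv'1, hv'0⟩ := key d
    have hpair : ∀ a : ℕ, Ω ((B ^ a) v) v' = if a = d then 1 else 0 := by
      intro a
      rcases lt_trichotomy a d with h | h | h
      · rw [hv'0 a (by omega) h, if_neg (by omega)]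
      · rw [h, if_pos rfl, hv'1]
      · rw [hBtop a h, if_neg (by omega)]
        simp
    have hpairW : ∀ a c : ℕ, Ω ((B ^ a) v) ((B ^ c) v') = if a + c = d then 1 else 0 := by
      intro a c; rw [hchain, hpair]
    have hvv : ∀ a c : ℕ, Ω ((B ^ a) v) ((B ^ c) v) = 0 := fun a c => by
      rw [hchain]; exact hself _ _
    have hv'v' : ∀ a c : ℕ, Ω ((B ^ a) v') ((B ^ c) v') = 0 := fun a c => by
      rw [hchain]; exact hself _ _
    have hvne : v ≠ 0 := fun h => hv (by rw [h, map_zero])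
    have hv'ne : v' ≠ 0 := by
      intro h
      rw [h, map_zero] at hv'1
      exact zero_ne_one hv'1
    -- the chain family
    set fc : Fin (d + 1) ⊕ Fin (d + 1) → V :=
      Sum.elim (fun a => (B ^ (a : ℕ)) v) (fun a => (B ^ (a : ℕ)) v') with hfc
    have hext1 : ∀ (g : Fin (d + 1) ⊕ Fin (d + 1) → ℂ) (a : Fin (d + 1)),
        Ω (∑ i, g i • fc i) ((B ^ (d - (a : ℕ))) v') = g (Sum.inl a) := by
      intro g a
      have ha := a.isLt
      simp only [map_sum, map_smul, LinearMap.sum_apply, LinearMap.smul_apply, smul_eq_mul]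
      rw [Finset.sum_eq_single (Sum.inl a)]
      · rw [hfc]
        simp only [Sum.elim_inl]
        rw [hpairW, if_pos (by omega), mul_one]
      · intro b _ hba
        rcases b with b | b
        · have hb := b.isLt
          rw [hfc]
          simp only [Sum.elim_inl]
          rw [hpairW, if_neg, mul_zero]
          intro hcon
          exact hba (by congr 1; exact Fin.ext (by omega))
        · rw [hfc]
          simp only [Sum.elim_inr]
          rw [hv'v', mul_zero]
      · intro h
        exact absurd (Finset.mem_univ _) h
    have hext2 : ∀ (g : Fin (d + 1) ⊕ Fin (d + 1) → ℂ) (a : Fin (d + 1)),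
        Ω ((B ^ (d - (a : ℕ))) v) (∑ i, g i • fc i) = g (Sum.inr a) := by
      intro g a
      have ha := a.isLt
      simp only [map_sum, map_smul, smul_eq_mul]
      rw [Finset.sum_eq_single (Sum.inr a)]
      · rw [hfc]
        simp only [Sum.elim_inr]
        rw [hpairW, if_pos (by omega), mul_one]
      · intro b _ hba
        rcases b with b | b
        · rw [hfc]
          simp only [Sum.elim_inl]
          rw [hvv, mul_zero]
        · have hb := b.isLt
          rw [hfc]
          simp only [Sum.elim_inr]
          rw [hpairW, if_neg, mul_zero]
          intro hcon
          exact hba (by congr 1; exact Fin.ext (by omega))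
      · intro h
        exact absurd (Finset.mem_univ _) h
    have hli : LinearIndependent ℂ fc := by
      rw [Fintype.linearIndependent_iff]
      intro g hg i
      rcases i with a | a
      · have h := hext1 g a
        rw [hg, map_zero, LinearMap.zero_apply] at h
        exact h.symm
      · have h := hext2 g a
        rw [hg, map_zero] at h
        exact h.symm
    -- the span of the chains
    set W : Submodule ℂ V := Submodule.span ℂ (Set.range fc) with hWdef
    have hWrank : finrank ℂ W = 2 * (d + 1) := by
      rw [hWdef, finrank_span_eq_card hli]
      simp [Fintype.card_sum]
      ring
    have hmemW : ∀ a : ℕ, a ≤ d → (B ^ a) v ∈ W ∧ (B ^ a) v' ∈ W := by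
      intro a ha
      constructor
      · exact Submodule.subset_span ⟨Sum.inl ⟨a, by omega⟩, rfl⟩
      · exact Submodule.subset_span ⟨Sum.inr ⟨a, by omega⟩, rfl⟩
    have hBstep : ∀ (x : V) (a : ℕ), B ((B ^ a) x) = (B ^ (a + 1)) x := by
      intro x a
      rw [pow_succ', Module.End.mul_apply]
    have hBW : ∀ x ∈ W, B x ∈ W := by
      intro x hx
      induction hx using Submodule.span_induction with
      | mem y hy =>
        obtain ⟨i, rfl⟩ := hy
        rcases i with a | a
        · have ha := a.isLt
          rw [hfc]
          simp only [Sum.elim_inl]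
          rw [hBstep]
          rcases Nat.lt_or_ge (a : ℕ) d with h | h
          · exact (hmemW _ (by omega)).1
          · have : (a : ℕ) = d := by omega
            rw [this, hd1]
            simp
        · have ha := a.isLt
          rw [hfc]
          simp only [Sum.elim_inr]
          rw [hBstep]
          rcases Nat.lt_or_ge (a : ℕ) d with h | h
          · exact (hmemW _ (by omega)).2
          · have : (a : ℕ) = d := by omega
            rw [this, hd1]
            simp
      | zero => simp
      | add y z _ _ hy hz => rw [map_add]; exact Submodule.add_mem _ hy hz
      | smul c y _ hy => rw [map_smul]; exact Submodule.smul_mem _ _ hy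
    have hresW : (Ω.restrict W).Nondegenerate := by
      refine LinearMap.BilinForm.Nondegenerate.ofSeparatingLeft ?_
      intro x hx
      obtain ⟨g, hgx⟩ := (Submodule.mem_span_range_iff_exists_fun ℂ).mp x.2
      have hcoef : ∀ i, g i = 0 := by
        intro i
        rcases i with a | a
        · have h1 := hext1 g a
          rw [hgx] at h1
          have hy : (B ^ (d - (a : ℕ))) v' ∈ W := (hmemW _ (by omega)).2
          have h2 : Ω (x : V) ((B ^ (d - (a : ℕ))) v') = 0 := hx ⟨_, hy⟩
          rw [h2] at h1
          exact h1.symm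
        · have h1 := hext2 g a
          rw [hgx] at h1
          have hy : (B ^ (d - (a : ℕ))) v ∈ W := (hmemW _ (by omega)).1
          have h2 : Ω (x : V) ((B ^ (d - (a : ℕ))) v) = 0 := hx ⟨_, hy⟩
          rw [halt, h2, neg_zero] at h1
          exact h1.symm
      apply Subtype.ext
      have : (x : V) = ∑ i, g i • fc i := hgx.symm
      rw [this]
      simp [hcoef]
    have hcompl : IsCompl W (Ω.orthogonal W) :=
      LinearMap.BilinForm.isCompl_orthogonal_of_restrict_nondegenerate hrefl hresW
    set U : Submodule ℂ V := Ω.orthogonal W with hUdef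
    have hWU : ∀ w ∈ W, ∀ u ∈ U, Ω w u = 0 := fun w hw u hu => hu w hw
    have hUW : ∀ u ∈ U, ∀ w ∈ W, Ω u w = 0 := fun u hu w hw => hrefl _ _ (hWU w hw u hu)
    have hBU : ∀ x ∈ U, B x ∈ U := by
      intro x hx w hw
      show Ω w (B x) = 0
      rw [← hB]
      exact hx (B w) (hBW w hw)
    -- restricted data on U
    set B' : Module.End ℂ U := B.restrict hBU with hB'def
    have hB'coe : ∀ (k : ℕ) (x : U), ((B' ^ k) x : V) = (B ^ k) (x : V) := by
      intro k x
      rw [hB'def, Module.End.pow_restrict]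
      simp [LinearMap.restrict_apply]
    have hBcu : ∀ (k : ℕ) (x : U), (B ^ k) (x : V) ∈ U := by
      intro k x
      rw [← hB'coe]
      exact ((B' ^ k) x).2
    set Ω' : LinearMap.BilinForm ℂ U := Ω.restrict U with hΩ'def
    have hΩ'app : ∀ x y : U, Ω' x y = Ω (x : V) (y : V) := fun x y => rfl
    have hΩ'nd : Ω'.Nondegenerate := by
      refine LinearMap.BilinForm.Nondegenerate.ofSeparatingLeft ?_
      intro x hx
      apply Subtype.ext
      apply hΩ.1
      intro z
      obtain ⟨w, uu, hw, hu, rfl⟩ := Submodule.codisjoint_iff_exists_add_eq.mp hcompl.codisjoint z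
      rw [map_add, hUW (x : V) x.2 w hw]
      have h2 : Ω (x : V) uu = 0 := hx ⟨uu, hu⟩
      rw [h2, add_zero]
    have hΩ'alt : ∀ x y : U, Ω' x y = -(Ω' y x) := fun x y => halt (x : V) (y : V)
    have hB'sym : ∀ x y : U, Ω' (B' x) y = Ω' x (B' y) := by
      intro x y
      rw [hΩ'app, hΩ'app]
      have h1 : ((B' x : U) : V) = B (x : V) := by
        have := hB'coe 1 x
        simpa using this
      have h2 : ((B' y : U) : V) = B (y : V) := by
        have := hB'coe 1 y
        simpa using this
      rw [h1, h2, hB]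
    have hB'nil : IsNilpotent B' := by
      refine ⟨d + 1, LinearMap.ext fun x => Subtype.ext ?_⟩
      show ((B' ^ (d + 1)) x : V) = (((0 : Module.End ℂ U) x : U) : V)
      rw [hB'coe, hd1]
      simp
    have hUrank : finrank ℂ U ≤ n := by
      have h1 := Submodule.finrank_add_eq_of_isCompl hcompl
      rw [hWrank] at h1
      omega
    obtain ⟨s', uv, uv', d', hu0, hu'0, ⟨b', hb'1, hb'2⟩, huu, hu'u', huu'⟩ :=
      ih U Ω' hΩ'nd hΩ'alt B' hB'sym hB'nil hUrank
    -- combine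
    set vn : Fin (s' + 1) → V := Fin.cons v (fun l => (uv l : V)) with hvn
    set v'n : Fin (s' + 1) → V := Fin.cons v' (fun l => (uv' l : V)) with hv'n
    set dn : Fin (s' + 1) → ℕ := Fin.cons d d' with hdn
    have hdn0 : dn 0 = d := by rw [hdn]; exact Fin.cons_zero _ _
    have hdns : ∀ l, dn l.succ = d' l := fun l => by rw [hdn]; exact Fin.cons_succ _ _ _
    have hvn0 : vn 0 = v := by rw [hvn]; exact Fin.cons_zero _ _
    have hvns : ∀ l, vn l.succ = (uv l : V) := fun l => by rw [hvn]; exact Fin.cons_succ _ _ _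
    have hv'n0 : v'n 0 = v' := by rw [hv'n]; exact Fin.cons_zero _ _
    have hv'ns : ∀ l, v'n l.succ = (uv' l : V) := fun l => by rw [hv'n]; exact Fin.cons_succ _ _ _
    set F : ((Σ l : Fin (s' + 1), Fin (dn l + 1)) ⊕ (Σ l : Fin (s' + 1), Fin (dn l + 1))) → V :=
      Sum.elim (fun p => (B ^ (p.2 : ℕ)) (vn p.1)) (fun p => (B ^ (p.2 : ℕ)) (v'n p.1)) with hF
    have hcard : Fintype.card
        ((Σ l : Fin (s' + 1), Fin (dn l + 1)) ⊕ (Σ l : Fin (s' + 1), Fin (dn l + 1)))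
        = finrank ℂ V := by
      have h1 := Submodule.finrank_add_eq_of_isCompl hcompl
      have h2 : finrank ℂ U = Fintype.card
          ((Σ l : Fin s', Fin (d' l + 1)) ⊕ (Σ l : Fin s', Fin (d' l + 1))) :=
        Module.finrank_eq_card_basis b'
      rw [hWrank] at h1
      simp only [Fintype.card_sum, Fintype.card_sigma, Fintype.card_fin] at h2 ⊢
      rw [Fin.sum_univ_succ]
      simp only [hdn0, hdns]
      omega
    have hspan : ⊤ ≤ Submodule.span ℂ (Set.range F) := by
      have hWle : W ≤ Submodule.span ℂ (Set.range F) := by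
        rw [hWdef]
        apply Submodule.span_le.mpr
        rintro _ ⟨i, rfl⟩
        rcases i with a | a
        · have ha := a.isLt
          rw [hfc]
          simp only [Sum.elim_inl]
          apply Submodule.subset_span
          refine ⟨Sum.inl ⟨0, ⟨(a : ℕ), by rw [hdn0]; omega⟩⟩, ?_⟩
          rw [hF]
          simp only [Sum.elim_inl]
          rw [hvn0]
        · have ha := a.isLt
          rw [hfc]
          simp only [Sum.elim_inr]
          apply Submodule.subset_span
          refine ⟨Sum.inr ⟨0, ⟨(a : ℕ), by rw [hdn0]; omega⟩⟩, ?_⟩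
          rw [hF]
          simp only [Sum.elim_inr]
          rw [hv'n0]
      have hUle : U ≤ Submodule.span ℂ (Set.range F) := by
        have hUeq : U = Submodule.map U.subtype ⊤ := by
          rw [Submodule.map_top, Submodule.range_subtype]
        rw [hUeq, ← b'.span_eq, Submodule.map_span]
        apply Submodule.span_le.mpr
        rintro _ ⟨_, ⟨i, rfl⟩, rfl⟩
        rcases i with ⟨l, a⟩ | ⟨l, a⟩
        · have ha := a.isLt
          apply Submodule.subset_span
          refine ⟨Sum.inl ⟨l.succ, ⟨(a : ℕ), by rw [hdns l]; omega⟩⟩, ?_⟩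
          rw [hF]
          simp only [Sum.elim_inl, Submodule.coe_subtype]
          rw [hvns l, ← hB'coe, hb'1]
        · have ha := a.isLt
          apply Submodule.subset_span
          refine ⟨Sum.inr ⟨l.succ, ⟨(a : ℕ), by rw [hdns l]; omega⟩⟩, ?_⟩
          rw [hF]
          simp only [Sum.elim_inr, Submodule.coe_subtype]
          rw [hv'ns l, ← hB'coe, hb'2]
      intro z _
      obtain ⟨w, uu, hw, hu, rfl⟩ := Submodule.codisjoint_iff_exists_add_eq.mp hcompl.codisjoint z
      exact Submodule.add_mem _ (hWle hw) (hUle hu)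
    refine ⟨s' + 1, vn, v'n, dn, ?_, ?_, ?_, ?_, ?_, ?_⟩
    · intro l
      refine Fin.cases ?_ (fun l' => ?_) l
      · rw [hvn0]; exact hvne
      · rw [hvns l']
        simp only [ne_eq, ZeroMemClass.coe_eq_zero]
        exact hu0 l'
    · intro l
      refine Fin.cases ?_ (fun l' => ?_) l
      · rw [hv'n0]; exact hv'ne
      · rw [hv'ns l']
        simp only [ne_eq, ZeroMemClass.coe_eq_zero]
        exact hu'0 l'
    · refine ⟨basisOfTopLeSpanOfCardEqFinrank F hspan hcard, ?_, ?_⟩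
      · intro l a
        rw [coe_basisOfTopLeSpanOfCardEqFinrank, hF]
        exact Sum.elim_inl _ _ _ ▸ rfl
      · intro l a
        rw [coe_basisOfTopLeSpanOfCardEqFinrank, hF]
        exact Sum.elim_inr _ _ _ ▸ rfl
    · intro l m a c ha hc
      revert ha hc
      refine Fin.cases ?_ (fun l' => ?_) l <;> refine Fin.cases ?_ (fun m' => ?_) m <;>
        intro ha hc
      · rw [hvn0]; exact hvv a c
      · rw [hdn0] at ha
        rw [hvn0, hvns m']
        exact hWU _ (hmemW a ha).1 _ (hBcu c (uv m'))
      · rw [hdn0] at hc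
        rw [hvn0, hvns l']
        exact hUW _ (hBcu a (uv l')) _ (hmemW c hc).1
      · rw [hdns] at ha hc
        rw [hvns l', hvns m', ← hB'coe, ← hB'coe]
        exact huu l' m' a c ha hc
    · intro l m a c ha hc
      revert ha hc
      refine Fin.cases ?_ (fun l' => ?_) l <;> refine Fin.cases ?_ (fun m' => ?_) m <;>
        intro ha hc
      · rw [hv'n0]; exact hv'v' a c
      · rw [hdn0] at ha
        rw [hv'n0, hv'ns m']
        exact hWU _ (hmemW a ha).2 _ (hBcu c (uv' m'))
      · rw [hdn0] at hc
        rw [hv'n0, hv'ns l']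
        exact hUW _ (hBcu a (uv' l')) _ (hmemW c hc).2
      · rw [hdns] at ha hc
        rw [hv'ns l', hv'ns m', ← hB'coe, ← hB'coe]
        exact hu'u' l' m' a c ha hc
    · intro l m a c ha hc
      revert ha hc
      refine Fin.cases ?_ (fun l' => ?_) l <;> refine Fin.cases ?_ (fun m' => ?_) m <;>
        intro ha hc
      · rw [hvn0, hv'n0, hpairW a c, hdn0]
        by_cases h : a + c = d
        · rw [if_pos h, if_pos ⟨rfl, h⟩]
        · rw [if_neg h, if_neg (by tauto)]
      · rw [hdn0] at ha
        rw [hvn0, hv'ns m']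
        rw [hWU _ ((hmemW a ha).1) _ (hBcu c (uv' m'))]
        rw [if_neg]
        rintro ⟨h, -⟩
        exact (Fin.succ_ne_zero m') h.symm
      · rw [hdn0] at hc
        rw [hvns l', hv'n0]
        rw [hUW _ (hBcu a (uv l')) _ (hmemW c hc).2]
        rw [if_neg]
        rintro ⟨h, -⟩
        exact (Fin.succ_ne_zero l') h
      · rw [hdns] at ha hc
        rw [hvns l', hv'ns m', ← hB'coe, ← hB'coe, hdns]
        have h : Ω ((B' ^ a) (uv l') : V) ((B' ^ c) (uv' m') : V)
            = if l' = m' ∧ a + c = d' l' then 1 else 0 := huu' l' m' a c ha hc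
        rw [h]
        by_cases he : l' = m' ∧ a + c = d' l'
        · rw [if_pos he, if_pos ⟨by rw [he.1], he.2⟩]
        · rw [if_neg he, if_neg]
          rintro ⟨h1, h2⟩
          exact he ⟨Fin.succ_inj.mp h1, h2⟩

/-- Let `V` be a complex symplectic vector space and `B ∈ 𝔭(V)` nilpotent and
symmetric with respect to the symplectic form. Then there exist nonzero vectors
`v₁,v₁',…,v_s,v_s'` and integers `d₁,…,d_s ≥ 0` such that the vectors `B^a v_l`,
`B^{a'} v_l'` (`0 ≤ a, a' ≤ d_l`) form a basis of `V`, and all pairings among the basis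
vectors vanish except `(B^a v_l, B^{d_l−a} v_l') = 1`. -/
theorem nilpotent_symmetric_symplectic_normal_form
    (V : Type*) [AddCommGroup V] [Module ℂ V] [FiniteDimensional ℂ V]
    (Ω : LinearMap.BilinForm ℂ V) (hΩ : Ω.Nondegenerate)
    (halt : ∀ v w, Ω v w = -(Ω w v))
    (B : Module.End ℂ V) (hB : ∀ v w, Ω (B v) w = Ω v (B w))
    (hnil : IsNilpotent B) :
    ∃ (s : ℕ) (v v' : Fin s → V) (d : Fin s → ℕ),
      (∀ l, v l ≠ 0) ∧ (∀ l, v' l ≠ 0) ∧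
      (∃ b : Basis ((Σ l : Fin s, Fin (d l + 1)) ⊕ (Σ l : Fin s, Fin (d l + 1))) ℂ V,
        (∀ (l : Fin s) (a : Fin (d l + 1)), b (Sum.inl ⟨l, a⟩) = (B ^ (a : ℕ)) (v l)) ∧
        (∀ (l : Fin s) (a : Fin (d l + 1)), b (Sum.inr ⟨l, a⟩) = (B ^ (a : ℕ)) (v' l))) ∧
      (∀ (l m : Fin s) (a c : ℕ), a ≤ d l → c ≤ d m →
        Ω ((B ^ a) (v l)) ((B ^ c) (v m)) = 0) ∧
      (∀ (l m : Fin s) (a c : ℕ), a ≤ d l → c ≤ d m →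
        Ω ((B ^ a) (v' l)) ((B ^ c) (v' m)) = 0) ∧
      (∀ (l m : Fin s) (a c : ℕ), a ≤ d l → c ≤ d m →
        Ω ((B ^ a) (v l)) ((B ^ c) (v' m)) = if l = m ∧ a + c = d l then 1 else 0) :=
  symplecticNF_aux (Module.finrank ℂ V) V Ω hΩ halt B hB hnil le_rfl
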